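/- Let S⁰ be an n×n real symmetric matrix, let r be a positive integer, and define g : ℝ^{n×r} → ℝ by g(V) = ‖VVᵀ − S⁰‖_F². If V* ∈ ℝ^{n×r} is a local minimizer of g (with respect to the topology of ℝ^{n×r}) and rank(V*) < r, then V* is a global minimizer of g, i.e. g(V*) ≤ g(W) for every W ∈ ℝ^{n×r}. -/
import Mathlib

open Matrix Filter Topology

private lemma bm_coeff2_nonneg (a b : ℝ) (h : ∀ᶠ t in 𝓝 (0:ℝ), 0 ≤ a * t^2 + b * t^4) :
    0 ≤ a := by
  have h1 : ∀ᶠ t in 𝓝[≠] (0:ℝ), 0 ≤ a + b * t^2 := by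
    filter_upwards [nhdsWithin_le_nhds h, self_mem_nhdsWithin] with t ht ht0
    have ht2 : (0:ℝ) < t^2 := by
      have := sq_pos_of_ne_zero ht0
      simpa [sq] using this
    nlinarith
  have h2 : Tendsto (fun t : ℝ => a + b * t^2) (𝓝[≠] (0:ℝ)) (𝓝 a) := by
    have : Tendsto (fun t : ℝ => a + b * t^2) (𝓝 (0:ℝ)) (𝓝 (a + b * 0^2)) :=
      (continuous_const.add (continuous_const.mul (continuous_id.pow 2))).tendsto 0
    simpa using this.mono_left nhdsWithin_le_nhds
  exact ge_of_tendsto h2 h1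

private lemma bm_coeff1_eq_zero (a b c d : ℝ)
    (h : ∀ᶠ t in 𝓝 (0:ℝ), 0 ≤ a * t + b * t^2 + c * t^3 + d * t^4) : a = 0 := by
  have cont : Tendsto (fun t : ℝ => a + b * t + c * t^2 + d * t^3) (𝓝 (0:ℝ)) (𝓝 a) := by
    have : Continuous (fun t : ℝ => a + b * t + c * t^2 + d * t^3) := by continuity
    simpa using this.tendsto 0
  have hpos : 0 ≤ a := by
    have h1 : ∀ᶠ t in 𝓝[>] (0:ℝ), 0 ≤ a + b * t + c * t^2 + d * t^3 := by
      filter_upwards [nhdsWithin_le_nhds h, self_mem_nhdsWithin] with t ht ht0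
      have : (0:ℝ) < t := ht0
      nlinarith
    exact ge_of_tendsto (cont.mono_left nhdsWithin_le_nhds) h1
  have hneg : a ≤ 0 := by
    have h1 : ∀ᶠ t in 𝓝[<] (0:ℝ), a + b * t + c * t^2 + d * t^3 ≤ 0 := by
      filter_upwards [nhdsWithin_le_nhds h, self_mem_nhdsWithin] with t ht ht0
      have : t < (0:ℝ) := ht0
      nlinarith
    exact le_of_tendsto (cont.mono_left nhdsWithin_le_nhds) h1
  linarith

private lemma bm_sum_sq_expand2 {n : ℕ} (D E : Matrix (Fin n) (Fin n) ℝ) (s : ℝ) :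
    ∑ i, ∑ j, (D i j + s * E i j)^2
      = (∑ i, ∑ j, (D i j)^2)
        + (2 * ∑ i, ∑ j, D i j * E i j) * s
        + (∑ i, ∑ j, (E i j)^2) * s^2 := by
  simp only [Finset.mul_sum, Finset.sum_mul, ← Finset.sum_add_distrib]
  exact Finset.sum_congr rfl fun i _ => Finset.sum_congr rfl fun j _ => by ring

private lemma bm_sum_sq_expand3 {n : ℕ} (D B C : Matrix (Fin n) (Fin n) ℝ) (t : ℝ) :
    ∑ i, ∑ j, (D i j + t * B i j + t^2 * C i j)^2
      = (∑ i, ∑ j, (D i j)^2)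
        + (2 * ∑ i, ∑ j, D i j * B i j) * t
        + ((∑ i, ∑ j, (B i j)^2) + 2 * ∑ i, ∑ j, D i j * C i j) * t^2
        + (2 * ∑ i, ∑ j, B i j * C i j) * t^3
        + (∑ i, ∑ j, (C i j)^2) * t^4 := by
  simp only [Finset.mul_sum, Finset.sum_mul, ← Finset.sum_add_distrib]
  exact Finset.sum_congr rfl fun i _ => Finset.sum_congr rfl fun j _ => by ring

private lemma bm_sum_rot {a b c : Type*} [Fintype a] [Fintype b] [Fintype c]
    (f : a → b → c → ℝ) :
    ∑ i, ∑ j, ∑ k, f i j k = ∑ k, ∑ i, ∑ j, f i j k :=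
  calc ∑ i, ∑ j, ∑ k, f i j k
      = ∑ i, ∑ k, ∑ j, f i j k :=
        Finset.sum_congr rfl fun i _ => Finset.sum_comm
    _ = ∑ k, ∑ i, ∑ j, f i j k := Finset.sum_comm

private lemma bm_entry_expand {n r : ℕ} (V H : Matrix (Fin n) (Fin r) ℝ)
    (S0 : Matrix (Fin n) (Fin n) ℝ) (t : ℝ) (i j : Fin n) :
    ((V + t • H) * (V + t • H)ᵀ - S0) i j
      = (V * Vᵀ - S0) i j
        + t * (∑ k, (H i k * V j k + V i k * H j k))
        + t^2 * (∑ k, H i k * H j k) := by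
  have hsum : ∑ k, (V i k + t * H i k) * (V j k + t * H j k)
      = (∑ k, V i k * V j k) + t * (∑ k, (H i k * V j k + V i k * H j k))
        + t^2 * (∑ k, H i k * H j k) := by
    simp only [Finset.mul_sum, ← Finset.sum_add_distrib]
    exact Finset.sum_congr rfl fun k _ => by ring
  simp only [Matrix.sub_apply, Matrix.mul_apply, Matrix.transpose_apply, Matrix.add_apply,
    Matrix.smul_apply, smul_eq_mul, hsum]
  ring

/-- Theorem 1 of the paper: a rank-deficient local minimizer of the
Burer–Monteiro factorized objective `g(V) = ‖VVᵀ − S⁰‖_F²` is a global minimizer. -/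
theorem rank_deficient_local_min_is_global {n r : ℕ} (hr : 0 < r)
    (S0 : Matrix (Fin n) (Fin n) ℝ) (hS0 : S0.IsSymm)
    (g : Matrix (Fin n) (Fin r) ℝ → ℝ)
    (hg : ∀ V : Matrix (Fin n) (Fin r) ℝ, g V = ∑ i, ∑ j, ((V * Vᵀ - S0) i j) ^ 2)
    (Vstar : Matrix (Fin n) (Fin r) ℝ)
    (hmin : IsLocalMin g Vstar)
    (hrank : Vstar.rank < r) :
    ∀ W : Matrix (Fin n) (Fin r) ℝ, g Vstar ≤ g W := by
  classical
  intro W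
  set Δ : Matrix (Fin n) (Fin n) ℝ := Vstar * Vstarᵀ - S0 with hΔ
  have hS : ∀ i j, S0 j i = S0 i j := fun i j => congrFun (congrFun hS0 i) j
  have hΔapp : ∀ i j, Δ i j = (∑ k, Vstar i k * Vstar j k) - S0 i j := fun i j => by
    simp [hΔ, Matrix.sub_apply, Matrix.mul_apply]
  have hΔsymm : ∀ i j, Δ i j = Δ j i := by
    intro i j
    rw [hΔapp, hΔapp, ← hS i j]
    congr 1
    exact Finset.sum_congr rfl fun k _ => mul_comm _ _
  -- kernel vector
  obtain ⟨u, hu0, hu⟩ : ∃ u : Fin r → ℝ, u ≠ 0 ∧ Vstar.mulVec u = 0 := by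
    by_contra hcon
    push_neg at hcon
    have hker : LinearMap.ker Vstar.mulVecLin = ⊥ := by
      rw [LinearMap.ker_eq_bot']
      intro v hv
      by_contra hv0
      exact absurd (hcon v hv0) (not_not.mpr hv)
    have h1 : Vstar.rank + Module.finrank ℝ (LinearMap.ker Vstar.mulVecLin) = r := by
      have := LinearMap.finrank_range_add_finrank_ker Vstar.mulVecLin
      simpa [Matrix.rank] using this
    rw [hker] at h1
    simp at h1
    omega
  have h0 : ∀ i, (∑ k, Vstar i k * u k) = 0 := fun i => by
    have := congrFun hu i
    simpa [Matrix.mulVec, dotProduct] using this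
  set c : ℝ := ∑ k, (u k)^2 with hcdef
  have hc : 0 < c := by
    obtain ⟨k, hk⟩ : ∃ k, u k ≠ 0 := by
      by_contra h
      push_neg at h
      exact hu0 (funext h)
    exact Finset.sum_pos' (fun k _ => sq_nonneg _) ⟨k, Finset.mem_univ k, by positivity⟩
  -- local minimality along lines
  have hminpath : ∀ H : Matrix (Fin n) (Fin r) ℝ,
      ∀ᶠ t in 𝓝 (0:ℝ), g Vstar ≤ g (Vstar + t • H) := by
    intro H
    have hcont : Continuous fun t : ℝ => Vstar + t • H := by continuity
    have htend : Tendsto (fun t : ℝ => Vstar + t • H) (𝓝 0) (𝓝 Vstar) := by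
      have := hcont.tendsto 0
      simpa using this
    exact htend.eventually hmin
  -- Step A : Δ is positive semidefinite (as a quadratic form)
  have qA : ∀ x : Fin n → ℝ, 0 ≤ ∑ i, ∑ j, Δ i j * (x i * x j) := by
    intro x
    set H : Matrix (Fin n) (Fin r) ℝ := Matrix.of fun i k => x i * u k with hH
    set E : Matrix (Fin n) (Fin n) ℝ := Matrix.of fun i j => x i * x j with hE
    set q : ℝ := ∑ i, ∑ j, Δ i j * (x i * x j) with hq
    set K : ℝ := ∑ i, ∑ j, (x i * x j)^2 with hK
    have entryA : ∀ (t : ℝ) (i j : Fin n),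
        ((Vstar + t • H) * (Vstar + t • H)ᵀ - S0) i j = Δ i j + (t^2 * c) * E i j := by
      intro t i j
      rw [bm_entry_expand]
      have e1 : (∑ k, (H i k * Vstar j k + Vstar i k * H j k)) = 0 := by
        have hterm : ∀ k : Fin r, H i k * Vstar j k + Vstar i k * H j k
            = x i * (Vstar j k * u k) + x j * (Vstar i k * u k) := by
          intro k
          simp only [hH, Matrix.of_apply]
          ring
        rw [Finset.sum_congr rfl fun k _ => hterm k, Finset.sum_add_distrib,
          ← Finset.mul_sum, ← Finset.mul_sum, h0 i, h0 j]
        ring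
      have e2 : (∑ k, H i k * H j k) = c * E i j := by
        have hterm : ∀ k : Fin r, H i k * H j k = (x i * x j) * (u k)^2 := by
          intro k
          simp only [hH, Matrix.of_apply]
          ring
        rw [Finset.sum_congr rfl fun k _ => hterm k, ← Finset.mul_sum]
        simp only [hE, Matrix.of_apply, hcdef]
        ring
      rw [e1, e2, ← hΔ]
      ring
    have gA : ∀ t : ℝ, g (Vstar + t • H)
        = g Vstar + (2 * c * q) * t^2 + (c^2 * K) * t^4 := by
      intro t
      rw [hg, hg]
      have step1 : ∑ i, ∑ j, (((Vstar + t • H) * (Vstar + t • H)ᵀ - S0) i j)^2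
          = ∑ i, ∑ j, (Δ i j + (t^2 * c) * E i j)^2 :=
        Finset.sum_congr rfl fun i _ => Finset.sum_congr rfl fun j _ => by
          rw [entryA t i j]
      rw [step1, bm_sum_sq_expand2]
      have hqE : ∑ i, ∑ j, Δ i j * E i j = q := by
        rw [hq]
        exact Finset.sum_congr rfl fun i _ => Finset.sum_congr rfl fun j _ => by
          simp [hE]
      have hKE : ∑ i, ∑ j, (E i j)^2 = K := by
        rw [hK]
        exact Finset.sum_congr rfl fun i _ => Finset.sum_congr rfl fun j _ => by
          simp [hE]
      rw [hqE, hKE, ← hΔ]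
      ring
    have hev : ∀ᶠ t in 𝓝 (0:ℝ), 0 ≤ (2*c*q) * t^2 + (c^2*K) * t^4 := by
      filter_upwards [hminpath H] with t ht
      rw [gA t] at ht
      linarith
    have := bm_coeff2_nonneg _ _ hev
    nlinarith
  -- Step B : Δ * Vstar = 0 (entrywise)
  have hΔV : ∀ i k, (∑ j, Δ i j * Vstar j k) = 0 := by
    set Hb : Matrix (Fin n) (Fin r) ℝ := Matrix.of fun i k => ∑ j, Δ i j * Vstar j k with hHb
    set Bm : Matrix (Fin n) (Fin n) ℝ :=
      Matrix.of fun i j => ∑ k, (Hb i k * Vstar j k + Vstar i k * Hb j k) with hBm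
    set Cm : Matrix (Fin n) (Fin n) ℝ := Matrix.of fun i j => ∑ k, Hb i k * Hb j k with hCm
    have gB : ∀ t : ℝ, g (Vstar + t • Hb)
        = g Vstar + (2 * ∑ i, ∑ j, Δ i j * Bm i j) * t
          + ((∑ i, ∑ j, (Bm i j)^2) + 2 * ∑ i, ∑ j, Δ i j * Cm i j) * t^2
          + (2 * ∑ i, ∑ j, Bm i j * Cm i j) * t^3
          + (∑ i, ∑ j, (Cm i j)^2) * t^4 := by
      intro t
      rw [hg, hg]
      have step1 : ∑ i, ∑ j, (((Vstar + t • Hb) * (Vstar + t • Hb)ᵀ - S0) i j)^2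
          = ∑ i, ∑ j, (Δ i j + t * Bm i j + t^2 * Cm i j)^2 :=
        Finset.sum_congr rfl fun i _ => Finset.sum_congr rfl fun j _ => by
          rw [bm_entry_expand, ← hΔ]
          simp only [hBm, hCm, Matrix.of_apply]
      rw [step1, bm_sum_sq_expand3, ← hΔ]
    have hev : ∀ᶠ t in 𝓝 (0:ℝ), 0 ≤ (2 * ∑ i, ∑ j, Δ i j * Bm i j) * t
          + ((∑ i, ∑ j, (Bm i j)^2) + 2 * ∑ i, ∑ j, Δ i j * Cm i j) * t^2
          + (2 * ∑ i, ∑ j, Bm i j * Cm i j) * t^3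
          + (∑ i, ∑ j, (Cm i j)^2) * t^4 := by
      filter_upwards [hminpath Hb] with t ht
      rw [gB t] at ht
      linarith
    have ha : (2 * ∑ i, ∑ j, Δ i j * Bm i j) = 0 := bm_coeff1_eq_zero _ _ _ _ hev
    -- identify the linear coefficient with 4 * ∑ Hb²
    have key1 : ∑ i, ∑ j, Δ i j * Bm i j = 2 * ∑ i, ∑ k, (Hb i k)^2 := by
      have esplit : ∀ i j, Δ i j * Bm i j
          = (∑ k, Δ i j * (Hb i k * Vstar j k)) + (∑ k, Δ i j * (Vstar i k * Hb j k)) := by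
        intro i j
        simp only [hBm, Matrix.of_apply, Finset.mul_sum, mul_add, Finset.sum_add_distrib]
      simp only [esplit, Finset.sum_add_distrib]
      have t1 : ∑ i, ∑ j, ∑ k, Δ i j * (Hb i k * Vstar j k) = ∑ i, ∑ k, (Hb i k)^2 := by
        refine Finset.sum_congr rfl fun i _ => ?_
        rw [Finset.sum_comm]
        refine Finset.sum_congr rfl fun k _ => ?_
        have : ∑ j, Δ i j * (Hb i k * Vstar j k) = Hb i k * ∑ j, Δ i j * Vstar j k := by
          rw [Finset.mul_sum]
          exact Finset.sum_congr rfl fun j _ => by ring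
        rw [this]
        simp [hHb, pow_two]
      have t2 : ∑ i, ∑ j, ∑ k, Δ i j * (Vstar i k * Hb j k) = ∑ j, ∑ k, (Hb j k)^2 := by
        rw [Finset.sum_comm]
        refine Finset.sum_congr rfl fun j _ => ?_
        rw [Finset.sum_comm]
        refine Finset.sum_congr rfl fun k _ => ?_
        have : ∑ i, Δ i j * (Vstar i k * Hb j k) = Hb j k * ∑ i, Δ j i * Vstar i k := by
          rw [Finset.mul_sum]
          exact Finset.sum_congr rfl fun i _ => by rw [hΔsymm i j]; ring
        rw [this]
        simp [hHb, pow_two]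
      rw [t1, t2]
      ring
    have hsum0 : ∑ i, ∑ k, (Hb i k)^2 = 0 := by
      rw [key1] at ha
      linarith
    intro i k
    have h1 := (Finset.sum_eq_zero_iff_of_nonneg
      (fun i _ => Finset.sum_nonneg fun k _ => sq_nonneg (Hb i k))).mp hsum0 i (Finset.mem_univ i)
    have h2 := (Finset.sum_eq_zero_iff_of_nonneg
      (fun k _ => sq_nonneg (Hb i k))).mp h1 k (Finset.mem_univ k)
    have h3 : Hb i k = 0 := by
      have h4 : Hb i k ^ 2 = 0 := h2
      exact pow_eq_zero_iff two_ne_zero |>.mp h4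
    simpa [hHb] using h3
  -- Step C : global optimality
  rw [hg, hg]
  set E : Matrix (Fin n) (Fin n) ℝ :=
    Matrix.of fun i j => (W * Wᵀ) i j - (Vstar * Vstarᵀ) i j with hEdef
  have hsplit : ∀ i j : Fin n, (W * Wᵀ - S0) i j = Δ i j + 1 * E i j := by
    intro i j
    simp only [hΔ, hEdef, Matrix.sub_apply, Matrix.of_apply]
    ring
  have step1 : ∑ i, ∑ j, ((W * Wᵀ - S0) i j)^2 = ∑ i, ∑ j, (Δ i j + 1 * E i j)^2 :=
    Finset.sum_congr rfl fun i _ => Finset.sum_congr rfl fun j _ => by rw [hsplit i j]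
  rw [step1, bm_sum_sq_expand2, ← hΔ]
  have hcross : 0 ≤ ∑ i, ∑ j, Δ i j * E i j := by
    have hW : ∑ i, ∑ j, Δ i j * (W * Wᵀ) i j = ∑ k, ∑ i, ∑ j, Δ i j * (W i k * W j k) := by
      have : ∀ i j : Fin n, Δ i j * (W * Wᵀ) i j = ∑ k, Δ i j * (W i k * W j k) := by
        intro i j
        simp [Matrix.mul_apply, Matrix.transpose_apply, Finset.mul_sum]
      simp only [this]
      exact bm_sum_rot _
    have hV : ∑ i, ∑ j, Δ i j * (Vstar * Vstarᵀ) i j = 0 := by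
      have e1 : ∀ i j : Fin n, Δ i j * (Vstar * Vstarᵀ) i j
          = ∑ k, Δ i j * (Vstar i k * Vstar j k) := by
        intro i j
        simp [Matrix.mul_apply, Matrix.transpose_apply, Finset.mul_sum]
      simp only [e1]
      have e2 : ∀ i : Fin n, ∑ j, ∑ k, Δ i j * (Vstar i k * Vstar j k)
          = ∑ k, Vstar i k * ∑ j, Δ i j * Vstar j k := by
        intro i
        rw [Finset.sum_comm]
        refine Finset.sum_congr rfl fun k _ => ?_
        rw [Finset.mul_sum]
        exact Finset.sum_congr rfl fun j _ => by ring
      simp only [e2, hΔV, mul_zero, Finset.sum_const_zero]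
    have hsplitE : ∑ i, ∑ j, Δ i j * E i j
        = (∑ i, ∑ j, Δ i j * (W * Wᵀ) i j) - ∑ i, ∑ j, Δ i j * (Vstar * Vstarᵀ) i j := by
      simp only [hEdef, Matrix.of_apply, mul_sub, Finset.sum_sub_distrib]
    rw [hsplitE, hV, hW, sub_zero]
    exact Finset.sum_nonneg fun k _ => qA (fun i => W i k)
  have hsq : 0 ≤ ∑ i, ∑ j, (E i j)^2 :=
    Finset.sum_nonneg fun i _ => Finset.sum_nonneg fun j _ => sq_nonneg _
  nlinarith
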